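/- Let F be a finite set of cardinality N ≥ 2 and let P_θ, θ∈F, be probability measures on a measurable space 𝒳 dominated by a σ-finite measure μ, and let P̄ := (1/N) Σ_{θ∈F} P_θ. Then (1/N) Σ_{θ∈F} D(P_θ||P̄) ≥ (1−r̄)·log(N(1−r̄)) + r̄·log(N r̄/(N−1)), where r̄ is the uniform-prior Bayes testing risk and the convention 0·log 0 = 0 is used. -/

import Mathlib

open MeasureTheory Real
open scoped ENNReal NNReal

lemma aux_mul_log_ge {x c : ℝ} (hx : 0 ≤ x) (hc : 0 < c) :
    x * Real.log c + x - c ≤ x * Real.log x := by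
  rcases hx.eq_or_lt with h | h
  · simp [← h]; linarith
  · have h1 : Real.log (c / x) ≤ c / x - 1 := Real.log_le_sub_one_of_pos (by positivity)
    rw [Real.log_div hc.ne' h.ne'] at h1
    have h2 : x * (Real.log c - Real.log x) ≤ x * (c / x - 1) :=
      mul_le_mul_of_nonneg_left h1 hx
    have h3 : x * (c / x - 1) = c - x := by field_simp
    nlinarith

lemma aux_log_sum {ι : Type*} (s : Finset ι) (a b : ι → ℝ)
    (ha : ∀ i ∈ s, 0 ≤ a i) (hb : ∀ i ∈ s, 0 ≤ b i)
    (hab : ∀ i ∈ s, b i = 0 → a i = 0) (hB : 0 < ∑ i ∈ s, b i) :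
    (∑ i ∈ s, a i) * Real.log ((∑ i ∈ s, a i) / (∑ i ∈ s, b i)) ≤
      ∑ i ∈ s, a i * Real.log (a i / b i) := by
  rcases eq_or_lt_of_le (Finset.sum_nonneg ha) with h0 | hApos
  · have hz : ∀ i ∈ s, a i = 0 := fun i hi =>
      (Finset.sum_eq_zero_iff_of_nonneg ha).mp h0.symm i hi
    have hR : ∑ i ∈ s, a i * Real.log (a i / b i) = 0 :=
      Finset.sum_eq_zero fun i hi => by rw [hz i hi]; ring
    rw [hR, ← h0]; simp
  · have key : ∀ i ∈ s, a i * Real.log ((∑ i ∈ s, a i) / (∑ i ∈ s, b i)) + a i -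
        b i * ((∑ i ∈ s, a i) / (∑ i ∈ s, b i)) ≤ a i * Real.log (a i / b i) := by
      intro i hi
      rcases eq_or_lt_of_le (hb i hi) with hb0 | hbpos
      · rw [hab i hi hb0.symm, ← hb0]; simp
      · have h1 := aux_mul_log_ge (x := a i / b i) (c := (∑ i ∈ s, a i) / (∑ i ∈ s, b i))
          (div_nonneg (ha i hi) (hb i hi)) (div_pos hApos hB)
        have h2 := mul_le_mul_of_nonneg_left h1 (hb i hi)
        have e1 : b i * (a i / b i * Real.log (a i / b i)) = a i * Real.log (a i / b i) := by
          field_simp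
        have e2 : b i * (a i / b i * Real.log ((∑ i ∈ s, a i) / (∑ i ∈ s, b i)) + a i / b i -
              (∑ i ∈ s, a i) / (∑ i ∈ s, b i))
            = a i * Real.log ((∑ i ∈ s, a i) / (∑ i ∈ s, b i)) + a i -
              b i * ((∑ i ∈ s, a i) / (∑ i ∈ s, b i)) := by
          field_simp
        rw [e1, e2] at h2
        exact h2
    have hsum : ∑ i ∈ s, (a i * Real.log ((∑ i ∈ s, a i) / (∑ i ∈ s, b i)) + a i -
        b i * ((∑ i ∈ s, a i) / (∑ i ∈ s, b i)))
        = (∑ i ∈ s, a i) * Real.log ((∑ i ∈ s, a i) / (∑ i ∈ s, b i)) := by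
      rw [Finset.sum_sub_distrib, Finset.sum_add_distrib, ← Finset.sum_mul, ← Finset.sum_mul]
      field_simp
      ring
    have := Finset.sum_le_sum key
    rw [hsum] at this
    exact this

lemma aux_abs_mul_log_le {x M : ℝ} (hx : 0 ≤ x) (hxM : x ≤ M) (hM : 1 ≤ M) :
    |x * Real.log x| ≤ max 1 (M * Real.log M) := by
  rcases le_or_gt x 1 with h1 | h1
  · have hlog : Real.log x ≤ 0 := Real.log_nonpos hx h1
    have hneg : x * Real.log x ≤ 0 := mul_nonpos_of_nonneg_of_nonpos hx hlog
    rw [abs_of_nonpos hneg]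
    refine le_max_of_le_left ?_
    rcases hx.eq_or_lt with h0 | h0
    · simp [← h0]
    · have : Real.log x⁻¹ ≤ x⁻¹ - 1 := Real.log_le_sub_one_of_pos (by positivity)
      rw [Real.log_inv] at this
      have h2 : x * (-Real.log x) ≤ x * (x⁻¹ - 1) :=
        mul_le_mul_of_nonneg_left (by linarith) hx
      have h3 : x * (x⁻¹ - 1) = 1 - x := by field_simp
      nlinarith
  · have hlog : 0 ≤ Real.log x := Real.log_nonneg h1.le
    rw [abs_of_nonneg (mul_nonneg hx hlog)]
    refine le_max_of_le_right ?_
    exact mul_le_mul hxM (Real.log_le_log (by linarith) hxM) hlog (by linarith)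

section
variable {X : Type*} [MeasurableSpace X] (P Q : Measure X)
  [IsFiniteMeasure P] [IsFiniteMeasure Q]

omit [IsFiniteMeasure P] in
lemma aux_integrable_rnDeriv_mul_log {M : ℝ} (hM : 1 ≤ M)
    (hb : ∀ᵐ x ∂Q, ((P.rnDeriv Q x).toReal) ≤ M) :
    Integrable (fun x => ((P.rnDeriv Q x).toReal) * Real.log ((P.rnDeriv Q x).toReal)) Q := by
  refine Integrable.mono' (integrable_const (max 1 (M * Real.log M))) ?_ ?_
  · exact ((Measure.measurable_rnDeriv P Q).ennreal_toReal.mul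
      (Real.measurable_log.comp
        (Measure.measurable_rnDeriv P Q).ennreal_toReal)).aestronglyMeasurable
  · filter_upwards [hb] with x hx
    exact aux_abs_mul_log_le ENNReal.toReal_nonneg hx hM

lemma aux_setIntegral_klTerm_ge (hPQ : P ≪ Q)
    (hint : Integrable (fun x => ((P.rnDeriv Q x).toReal) * Real.log ((P.rnDeriv Q x).toReal)) Q)
    (A : Set X) :
    (P A).toReal * Real.log ((P A).toReal / (Q A).toReal) ≤
      ∫ x in A, ((P.rnDeriv Q x).toReal) * Real.log ((P.rnDeriv Q x).toReal) ∂Q := by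
  set f : X → ℝ := fun x => (P.rnDeriv Q x).toReal with hf
  have hfint : Integrable f Q := Measure.integrable_toReal_rnDeriv
  have hfA : ∫ x in A, f x ∂Q = (P A).toReal := Measure.setIntegral_toReal_rnDeriv hPQ A
  by_cases hQA : Q A = 0
  · have hPA : P A = 0 := hPQ hQA
    rw [hPA]
    have hres : Q.restrict A = 0 := Measure.restrict_eq_zero.mpr hQA
    rw [hres, integral_zero_measure]
    simp
  · by_cases hPA : (P A).toReal = 0
    · have hzero : f =ᵐ[Q.restrict A] 0 := by
        rw [← integral_eq_zero_iff_of_nonneg (fun x => ENNReal.toReal_nonneg)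
          (hfint.integrableOn)]
        rw [hfA, hPA]
      have : ∫ x in A, f x * Real.log (f x) ∂Q = 0 := by
        rw [integral_congr_ae (g := fun _ => (0:ℝ)) ?_, integral_zero]
        filter_upwards [hzero] with x hx
        simp [hx]
      rw [this, hPA]; simp
    · have hQA' : 0 < (Q A).toReal :=
        ENNReal.toReal_pos hQA (measure_ne_top Q A)
      have hPA' : 0 < (P A).toReal :=
        lt_of_le_of_ne ENNReal.toReal_nonneg (Ne.symm hPA)
      set c : ℝ := (P A).toReal / (Q A).toReal with hc
      have hcpos : 0 < c := div_pos hPA' hQA'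
      have hpt : ∀ x, f x * Real.log c + f x - c ≤ f x * Real.log (f x) :=
        fun x => aux_mul_log_ge ENNReal.toReal_nonneg hcpos
      have hint1 : Integrable (fun x => f x * Real.log c + f x - c) (Q.restrict A) :=
        ((hfint.integrableOn.mul_const _).add hfint.integrableOn).sub
          (integrable_const c)
      have hmono : ∫ x in A, (f x * Real.log c + f x - c) ∂Q ≤
          ∫ x in A, f x * Real.log (f x) ∂Q :=
        integral_mono hint1 hint.integrableOn fun x => hpt x
      have hcalc : ∫ x in A, (f x * Real.log c + f x - c) ∂Q
          = (P A).toReal * Real.log c := by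
        have h1 : Integrable (fun x => f x * Real.log c + f x) (Q.restrict A) :=
          (hfint.integrableOn.mul_const _).add hfint.integrableOn
        rw [integral_sub h1 (integrable_const c),
          integral_add (hfint.integrableOn.mul_const _) hfint.integrableOn,
          integral_mul_const, hfA, setIntegral_const]
        have : (Q A).toReal • c = (P A).toReal := by
          rw [smul_eq_mul, hc]; field_simp
        rw [measureReal_def, this]; ring
      rw [← hcalc]; exact hmono

end


/-- The Kullback-Leibler divergence `D(P‖Q) = ∫ (dP/dQ) log(dP/dQ) dQ` (real-valued;
meaningful when `P ≪ Q` and the integrand is integrable, in which case it agrees with the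
usual definition). Note `Real.log 0 = 0`, implementing the convention `0 log 0 = 0`. -/
noncomputable def klDivR {X : Type*} [MeasurableSpace X] (P Q : Measure X) : ℝ :=
  ∫ x, ((P.rnDeriv Q x).toReal) * Real.log ((P.rnDeriv Q x).toReal) ∂Q

/-- The uniform-prior Bayes testing risk `r̄ = inf_T (1/N) Σ_θ P_θ {T ≠ θ}`, the infimum
being over all measurable tests `T : X → F`. -/
noncomputable def bayesRisk {X F : Type*} [MeasurableSpace X] [Fintype F]
    (P : F → Measure X) : ℝ :=
  ⨅ T : {T : X → F // ∀ θ, MeasurableSet {x | T x = θ}},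
    (Fintype.card F : ℝ)⁻¹ * ∑ θ, (P θ {x | T.1 x ≠ θ}).toReal

/-- sharpened Fano inequality / Example 1: the Jensen-Shannon divergence
`(1/N) Σ_θ D(P_θ‖P̄)` is at least `(1-r̄) log(N(1-r̄)) + r̄ log(N r̄/(N-1))`. -/
theorem statement5 {X F : Type*} [MeasurableSpace X] [Fintype F]
    (μ : Measure X) [SigmaFinite μ]
    (P : F → Measure X) (hPdom : ∀ θ, P θ ≪ μ) (hPprob : ∀ θ, IsProbabilityMeasure (P θ))
    (N : ℝ) (hN : N = Fintype.card F) (hN2 : 2 ≤ N)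
    (Pbar : Measure X) (hPbar : Pbar = (Fintype.card F : ℝ≥0∞)⁻¹ • ∑ θ, P θ)
    (r : ℝ) (hr : r = bayesRisk P) :
    (1 - r) * Real.log (N * (1 - r)) + r * Real.log (N * r / (N - 1)) ≤
      N⁻¹ * ∑ θ, klDivR (P θ) Pbar := by
  classical
  have hcard0 : (Fintype.card F : ℝ≥0∞) ≠ 0 := by
    have : 0 < Fintype.card F := by
      have : (0:ℝ) < N := by linarith
      rw [hN] at this; exact_mod_cast this
    exact_mod_cast this.ne'
  have hcardtop : (Fintype.card F : ℝ≥0∞) ≠ ∞ := ENNReal.natCast_ne_top _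
  have hNpos : (0:ℝ) < N := by linarith
  -- Pbar is a probability measure
  have hPbar_univ : Pbar Set.univ = 1 := by
    rw [hPbar]
    rw [Measure.smul_apply, Measure.finset_sum_apply]
    simp only [measure_univ]
    rw [Finset.sum_const, Finset.card_univ, nsmul_eq_mul, mul_one, smul_eq_mul]
    exact ENNReal.inv_mul_cancel hcard0 hcardtop
  have instPbar : IsProbabilityMeasure Pbar := ⟨hPbar_univ⟩
  -- domination and bounds
  have hle : ∀ θ (s : Set X), P θ s ≤ (Fintype.card F : ℝ≥0∞) * Pbar s := by
    intro θ s
    rw [hPbar, Measure.smul_apply, smul_eq_mul, ← mul_assoc,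
      ENNReal.mul_inv_cancel hcard0 hcardtop, one_mul, Measure.finset_sum_apply]
    exact Finset.single_le_sum (f := fun θ' => P θ' s) (fun _ _ => zero_le)
      (Finset.mem_univ θ)
  have habs : ∀ θ, P θ ≪ Pbar := by
    intro θ
    intro s hs
    have := hle θ s
    rw [hs, mul_zero] at this
    exact le_antisymm this zero_le
  have hbound : ∀ θ, ∀ᵐ x ∂Pbar, (((P θ).rnDeriv Pbar x).toReal) ≤ N := by
    intro θ
    have h : (P θ).rnDeriv Pbar ≤ᵐ[Pbar] fun _ => (Fintype.card F : ℝ≥0∞) := by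
      refine ae_le_of_forall_setLIntegral_le_of_sigmaFinite
        (Measure.measurable_rnDeriv _ _) fun s hs _ => ?_
      calc ∫⁻ x in s, (P θ).rnDeriv Pbar x ∂Pbar ≤ P θ s :=
            Measure.setLIntegral_rnDeriv_le s
        _ ≤ (Fintype.card F : ℝ≥0∞) * Pbar s := hle θ s
        _ = ∫⁻ _ in s, (Fintype.card F : ℝ≥0∞) ∂Pbar := by
            rw [setLIntegral_const, mul_comm]
    filter_upwards [h] with x hx
    calc ((P θ).rnDeriv Pbar x).toReal ≤ ((Fintype.card F : ℝ≥0∞)).toReal :=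
          ENNReal.toReal_mono hcardtop hx
      _ = N := by rw [hN]; simp
  have hint : ∀ θ, Integrable
      (fun x => (((P θ).rnDeriv Pbar x).toReal) * Real.log (((P θ).rnDeriv Pbar x).toReal))
      Pbar := fun θ => aux_integrable_rnDeriv_mul_log _ _ (by linarith) (hbound θ)
  -- per-test inequality
  have hN2' : (2:ℝ) ≤ Fintype.card F := by rw [← hN]; exact hN2
  -- per-test inequality, phrased via the risk function g
  set g : {T : X → F // ∀ θ, MeasurableSet {x | T x = θ}} → ℝ :=
    fun T => (Fintype.card F : ℝ)⁻¹ * ∑ θ, (P θ {x | T.1 x ≠ θ}).toReal with hg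
  have key : ∀ T, (1 - g T) * Real.log (N * (1 - g T)) +
      g T * Real.log (N * g T / (N - 1)) ≤ N⁻¹ * ∑ θ, klDivR (P θ) Pbar := by
    intro T
    set A : F → Set X := fun θ => {x | T.1 x = θ} with hA
    have hAm : ∀ θ, MeasurableSet (A θ) := T.2
    set a : F → ℝ := fun θ => ((P θ) (A θ)).toReal with ha
    set b : F → ℝ := fun θ => (Pbar (A θ)).toReal with hb
    set a' : F → ℝ := fun θ => ((P θ) (A θ)ᶜ).toReal with ha'
    set b' : F → ℝ := fun θ => (Pbar (A θ)ᶜ).toReal with hb'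
    have hcompl : ∀ θ, {x | T.1 x ≠ θ} = (A θ)ᶜ := fun θ => rfl
    haveI := fun θ => hPprob θ
    have ha1 : ∀ θ, a θ + a' θ = 1 := by
      intro θ
      have h := measure_add_measure_compl (μ := P θ) (hAm θ)
      rw [measure_univ] at h
      have := congrArg ENNReal.toReal h
      rw [ENNReal.toReal_add (measure_ne_top _ _) (measure_ne_top _ _)] at this
      simpa using this
    have hb1 : ∀ θ, b θ + b' θ = 1 := by
      intro θ
      have h := measure_add_measure_compl (μ := Pbar) (hAm θ)
      rw [measure_univ] at h
      have := congrArg ENNReal.toReal h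
      rw [ENNReal.toReal_add (measure_ne_top _ _) (measure_ne_top _ _)] at this
      simpa using this
    have hpre : ∀ θ, T.1 ⁻¹' {θ} = A θ := by
      intro θ; ext x; simp [hA]
    have hsbE : ∑ θ, Pbar (A θ) = 1 := by
      have h := sum_measure_preimage_singleton (μ := Pbar) Finset.univ
        (f := T.1) (fun y _ => by rw [hpre y]; exact hAm y)
      simp only [hpre] at h
      rw [h]
      simp
    have hsb : ∑ θ, b θ = 1 := by
      have := congrArg ENNReal.toReal hsbE
      rw [ENNReal.toReal_sum (fun θ _ => measure_ne_top _ _)] at this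
      simpa using this
    have hcardN : (Fintype.card F : ℝ) = N := hN.symm
    have hsb' : ∑ θ, b' θ = N - 1 := by
      have h : ∀ θ : F, b' θ = 1 - b θ := fun θ => by linarith [hb1 θ]
      rw [Finset.sum_congr rfl (fun θ _ => h θ), Finset.sum_sub_distrib, hsb,
        Finset.sum_const, Finset.card_univ, nsmul_eq_mul, mul_one, hcardN]
    have hkl : ∀ θ, a θ * Real.log (a θ / b θ) + a' θ * Real.log (a' θ / b' θ) ≤
        klDivR (P θ) Pbar := by
      intro θ
      have hsplit := integral_add_compl (hAm θ) (hint θ)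
      have h1 := aux_setIntegral_klTerm_ge (P θ) Pbar (habs θ) (hint θ) (A θ)
      have h2 := aux_setIntegral_klTerm_ge (P θ) Pbar (habs θ) (hint θ) (A θ)ᶜ
      calc a θ * Real.log (a θ / b θ) + a' θ * Real.log (a' θ / b' θ)
          ≤ (∫ x in A θ, (((P θ).rnDeriv Pbar x).toReal) *
                Real.log (((P θ).rnDeriv Pbar x).toReal) ∂Pbar) +
            ∫ x in (A θ)ᶜ, (((P θ).rnDeriv Pbar x).toReal) *
                Real.log (((P θ).rnDeriv Pbar x).toReal) ∂Pbar := add_le_add h1 h2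
        _ = klDivR (P θ) Pbar := hsplit
    have haz : ∀ θ ∈ Finset.univ, b θ = 0 → a θ = 0 := by
      intro θ _ h
      have hb0 : Pbar (A θ) = 0 := by
        rcases (ENNReal.toReal_eq_zero_iff _).mp h with h' | h'
        · exact h'
        · exact absurd h' (measure_ne_top _ _)
      have : P θ (A θ) = 0 := habs θ hb0
      rw [ha]; simp [this]
    have haz' : ∀ θ ∈ Finset.univ, b' θ = 0 → a' θ = 0 := by
      intro θ _ h
      have hb0 : Pbar (A θ)ᶜ = 0 := by
        rcases (ENNReal.toReal_eq_zero_iff _).mp h with h' | h'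
        · exact h'
        · exact absurd h' (measure_ne_top _ _)
      have : P θ (A θ)ᶜ = 0 := habs θ hb0
      rw [ha']; simp [this]
    have hanon : ∀ θ ∈ Finset.univ, 0 ≤ a θ := fun θ _ => ENNReal.toReal_nonneg
    have hbnon : ∀ θ ∈ Finset.univ, 0 ≤ b θ := fun θ _ => ENNReal.toReal_nonneg
    have hanon' : ∀ θ ∈ Finset.univ, (0:ℝ) ≤ a' θ := fun θ _ => ENNReal.toReal_nonneg
    have hbnon' : ∀ θ ∈ Finset.univ, (0:ℝ) ≤ b' θ := fun θ _ => ENNReal.toReal_nonneg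
    have hls1 := aux_log_sum Finset.univ a b hanon hbnon haz (by rw [hsb]; norm_num)
    have hls2 := aux_log_sum Finset.univ a' b' hanon' hbnon' haz' (by rw [hsb']; linarith)
    rw [hsb] at hls1
    rw [hsb'] at hls2
    set SA : ℝ := ∑ θ, a θ with hSA
    set SA' : ℝ := ∑ θ, a' θ with hSA'
    have hSsum : SA + SA' = N := by
      rw [hSA, hSA', ← Finset.sum_add_distrib,
        Finset.sum_congr rfl (fun θ _ => ha1 θ), Finset.sum_const, Finset.card_univ,
        nsmul_eq_mul, mul_one, hcardN]
    have hrisk : ∑ θ, (P θ {x | T.1 x ≠ θ}).toReal = SA' := by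
      rw [hSA']
      exact Finset.sum_congr rfl fun θ _ => by rw [hcompl θ]
    have hgT : g T = N⁻¹ * SA' := by simp only [hg]; rw [hrisk, hcardN]
    have hsumkl : SA * Real.log SA + SA' * Real.log (SA' / (N - 1)) ≤
        ∑ θ, klDivR (P θ) Pbar := by
      have h3 : SA * Real.log (SA / 1) + SA' * Real.log (SA' / (N - 1)) ≤
          (∑ θ, a θ * Real.log (a θ / b θ)) + ∑ θ, a' θ * Real.log (a' θ / b' θ) :=
        add_le_add hls1 hls2
      rw [div_one] at h3
      calc SA * Real.log SA + SA' * Real.log (SA' / (N - 1))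
          ≤ (∑ θ, a θ * Real.log (a θ / b θ)) + ∑ θ, a' θ * Real.log (a' θ / b' θ) := h3
        _ = ∑ θ, (a θ * Real.log (a θ / b θ) + a' θ * Real.log (a' θ / b' θ)) :=
            (Finset.sum_add_distrib).symm
        _ ≤ ∑ θ, klDivR (P θ) Pbar := Finset.sum_le_sum fun θ _ => hkl θ
    have e1 : 1 - g T = N⁻¹ * SA := by
      rw [hgT]; field_simp; linarith
    have e2 : N * (N⁻¹ * SA) = SA := by field_simp
    have e3 : N * g T / (N - 1) = SA' / (N - 1) := by
      rw [hgT]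
      have : N * (N⁻¹ * SA') = SA' := by field_simp
      rw [this]
    rw [e1, e2, e3, hgT]
    have hfin := mul_le_mul_of_nonneg_left hsumkl (inv_nonneg.mpr hNpos.le)
    calc N⁻¹ * SA * Real.log SA + N⁻¹ * SA' * Real.log (SA' / (N - 1))
        = N⁻¹ * (SA * Real.log SA + SA' * Real.log (SA' / (N - 1))) := by ring
      _ ≤ N⁻¹ * ∑ θ, klDivR (P θ) Pbar := hfin
  -- final assembly via continuity of the bound in the risk
  haveI hFne : Nonempty F := by
    have : (0:ℝ) < Fintype.card F := by rw [← hN]; linarith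
    have : 0 < Fintype.card F := by exact_mod_cast this
    exact Fintype.card_pos_iff.mp this
  obtain ⟨θ0⟩ := hFne
  haveI : Nonempty {T : X → F // ∀ θ, MeasurableSet {x | T x = θ}} :=
    ⟨⟨fun _ => θ0, fun θ => by by_cases h : θ0 = θ <;> simp [h]⟩⟩
  have hg0 : ∀ T, 0 ≤ g T := fun T =>
    mul_nonneg (inv_nonneg.mpr (by positivity)) (Finset.sum_nonneg fun θ _ => ENNReal.toReal_nonneg)
  have hbdd : BddBelow (Set.range g) := ⟨0, fun x ⟨T, hT⟩ => hT ▸ hg0 T⟩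
  have hrg : r = ⨅ T, g T := hr
  have hr0 : 0 ≤ r := hrg ▸ le_ciInf hg0
  -- r ≤ 1 - N⁻¹ via the constant test
  have hrN : r ≤ 1 - N⁻¹ := by
    set T0 : {T : X → F // ∀ θ, MeasurableSet {x | T x = θ}} :=
      ⟨fun _ => θ0, fun θ => by by_cases h : θ0 = θ <;> simp [h]⟩ with hT0
    have hle0 : r ≤ g T0 := hrg ▸ ciInf_le hbdd T0
    have hval : ∀ θ : F, (P θ {x : X | T0.1 x ≠ θ}).toReal = if θ = θ0 then 0 else 1 := by
      intro θ
      by_cases h : θ = θ0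
      · subst h
        have : {x : X | T0.1 x ≠ θ} = (∅ : Set X) := by ext x; simp [hT0]
        simp [this]
      · have hset : {x : X | T0.1 x ≠ θ} = (Set.univ : Set X) := by
          ext x; simp [hT0, (Ne.symm h : θ0 ≠ θ)]
        haveI := hPprob θ
        rw [hset]
        simp [h]
    have hsum0 : ∑ θ, (P θ {x : X | T0.1 x ≠ θ}).toReal = N - 1 := by
      rw [Finset.sum_congr rfl fun θ _ => hval θ]
      have : ∀ θ : F, (if θ = θ0 then (0:ℝ) else 1) = 1 - (if θ = θ0 then 1 else 0) := by
        intro θ; by_cases h : θ = θ0 <;> simp [h]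
      rw [Finset.sum_congr rfl fun θ _ => this θ, Finset.sum_sub_distrib,
        Finset.sum_const, Finset.card_univ, nsmul_eq_mul, mul_one,
        Finset.sum_ite_eq' Finset.univ θ0 (fun _ => (1:ℝ))]
      simp [hN.symm]
    have hgT0 : g T0 = 1 - N⁻¹ := by
      rw [hg]
      show (Fintype.card F : ℝ)⁻¹ * ∑ θ, (P θ {x : X | T0.1 x ≠ θ}).toReal = 1 - N⁻¹
      rw [hsum0, ← hN]
      field_simp
    linarith [hgT0 ▸ hle0]
  have hinvN : 0 < N⁻¹ := by positivity
  have hr1 : r < 1 := by linarith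
  -- the function φ, continuous version of the LHS
  set φ : ℝ → ℝ := fun s => (1-s) * Real.log N + (1-s) * Real.log (1-s) +
    s * Real.log (N/(N-1)) + s * Real.log s with hφ
  have hφcont : Continuous φ := by
    have h1 : Continuous fun s : ℝ => (1-s) * Real.log (1-s) :=
      Real.continuous_mul_log.comp (continuous_const.sub continuous_id)
    exact ((((continuous_const.sub continuous_id).mul continuous_const).add h1).add
      (continuous_id.mul continuous_const)).add Real.continuous_mul_log
  have hφψ : ∀ s : ℝ, 0 ≤ s → s < 1 →
      (1 - s) * Real.log (N * (1 - s)) + s * Real.log (N * s / (N - 1)) = φ s := by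
    intro s hs0 hs1
    have hl1 : Real.log (N * (1 - s)) = Real.log N + Real.log (1 - s) :=
      Real.log_mul hNpos.ne' (by linarith)
    rcases hs0.eq_or_lt with h0 | h0
    · rw [← h0]; simp [hφ, hl1]
    · have hl2 : Real.log (N * s / (N - 1)) = Real.log (N / (N - 1)) + Real.log s := by
        have : N * s / (N - 1) = (N / (N - 1)) * s := by ring
        rw [this, Real.log_mul (by
          have h1 : (0:ℝ) < N - 1 := by linarith
          positivity) h0.ne']
      rw [hl1, hl2, hφ]; ring
  by_contra hcon
  push_neg at hcon
  set K : ℝ := N⁻¹ * ∑ θ, klDivR (P θ) Pbar with hK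
  have hφr : (1 - r) * Real.log (N * (1 - r)) + r * Real.log (N * r / (N - 1)) = φ r :=
    hφψ r hr0 hr1
  rw [hφr] at hcon
  have hε : 0 < φ r - K := by linarith
  obtain ⟨δ, hδpos, hδ⟩ := Metric.continuousAt_iff.mp (hφcont.continuousAt (x := r)) _ hε
  set ε' : ℝ := min δ N⁻¹ with hε'
  have hε'pos : 0 < ε' := lt_min hδpos hinvN
  have hlt : (⨅ T, g T) < r + ε' := by rw [← hrg]; linarith
  obtain ⟨T, hT⟩ := exists_lt_of_ciInf_lt hlt
  have hgTr : r ≤ g T := hrg ▸ ciInf_le hbdd T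
  have hgT1 : g T < 1 := by
    have := min_le_right δ N⁻¹
    linarith
  have hdist : dist (g T) r < δ := by
    rw [Real.dist_eq, abs_of_nonneg (by linarith)]
    have := min_le_left δ N⁻¹
    linarith
  have hnear := hδ hdist
  rw [Real.dist_eq] at hnear
  have habs2 := abs_lt.mp hnear
  have hkey := key T
  rw [hφψ (g T) (hg0 T) hgT1] at hkey
  linarith [habs2.1, habs2.2]
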